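/- arXiv:1505.06080 — 6 statements merged into one kernel-verified Lean document; each statement's English description precedes it below -/
import Mathlib

section
/- For every positive integer d, every s ≥ 0 and every μ ∈ ℂ with Re(μ) < d, the function t ↦ e^{−s·coth(t) + μ·t}/sinh(t)^d is (Lebesgue) integrable on the interval (h, ∞), and for each fixed s ≥ 0 the function μ ↦ I∞(μ,s) = ∫_h^∞ e^{−s·coth(t) + μ·t}/sinh(t)^d dt is holomorphic on the half-plane {μ ∈ ℂ : Re(μ) < d}. -/
open MeasureTheory

noncomputable def hconst : ℝ := (1/2) * Real.log (5/3)

noncomputable def cothR (t : ℝ) : ℝ := Real.cosh t / Real.sinh t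

noncomputable def Iinf (d : ℕ) (μ : ℂ) (s : ℝ) : ℂ :=
  ∫ t in Set.Ioi hconst,
    Complex.exp (-(s:ℂ) * (cothR t : ℂ) + μ * (t:ℂ)) / ((Real.sinh t : ℂ))^d

lemma hconst_pos : 0 < hconst := by
  have h1 : (1:ℝ) < 5/3 := by norm_num
  have := Real.log_pos h1
  unfold hconst; positivity

noncomputable def Kc : ℝ := (1 - Real.exp (-2 * hconst)) / 2

lemma Kc_pos : 0 < Kc := by
  have h1 : Real.exp (-2 * hconst) < 1 := by
    rw [Real.exp_lt_one_iff]
    nlinarith [hconst_pos]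
  unfold Kc; linarith

lemma sinh_ge {t : ℝ} (ht : hconst ≤ t) : Kc * Real.exp t ≤ Real.sinh t := by
  have h0 : 0 < t := lt_of_lt_of_le hconst_pos ht
  rw [Real.sinh_eq]
  have h2 : Real.exp (-t) ≤ Real.exp (-2*hconst) * Real.exp t := by
    rw [← Real.exp_add]
    apply Real.exp_le_exp.mpr; linarith
  unfold Kc; nlinarith [Real.exp_pos t]

lemma norm_F (d : ℕ) {s : ℝ} (hs : 0 ≤ s) (μ : ℂ) {t : ℝ} (ht : hconst < t) :
    ‖Complex.exp (-(s:ℂ) * (cothR t : ℂ) + μ * (t:ℂ)) / ((Real.sinh t : ℂ))^d‖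
      ≤ Kc⁻¹ ^ d * Real.exp ((μ.re - d) * t) := by
  have h0 : 0 < t := lt_trans hconst_pos ht
  have hsinh : 0 < Real.sinh t := Real.sinh_pos_iff.mpr h0
  have hcoth : 0 ≤ cothR t := div_nonneg (Real.cosh_pos t).le hsinh.le
  have hre : (-(s:ℂ) * (cothR t : ℂ) + μ * (t:ℂ)).re = -(s * cothR t) + μ.re * t := by
    simp [Complex.add_re, Complex.mul_re]
  rw [norm_div, norm_pow, Complex.norm_exp, hre,
    Complex.norm_real, Real.norm_eq_abs, abs_of_pos hsinh]
  have h1 : Real.exp (-(s * cothR t) + μ.re * t) ≤ Real.exp (μ.re * t) := by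
    apply Real.exp_le_exp.mpr; nlinarith
  have h2 : (Kc * Real.exp t)^d ≤ (Real.sinh t)^d :=
    pow_le_pow_left₀ (mul_nonneg Kc_pos.le (Real.exp_nonneg t)) (sinh_ge ht.le) d
  have h3 : (0:ℝ) < (Kc * Real.exp t)^d := pow_pos (mul_pos Kc_pos (Real.exp_pos t)) d
  have key : Real.exp (-(s * cothR t) + μ.re * t) / (Real.sinh t)^d
      ≤ Real.exp (μ.re * t) / (Kc * Real.exp t)^d :=
    div_le_div₀ (Real.exp_nonneg _) h1 h3 h2
  refine key.trans (le_of_eq ?_)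
  rw [mul_pow, ← Real.exp_nat_mul, sub_mul, Real.exp_sub]
  field_simp
  rw [one_div_pow]

lemma int_t_exp {b : ℝ} (hb : 0 < b) :
    IntegrableOn (fun t : ℝ => t * Real.exp (-b * t)) (Set.Ioi hconst) := by
  have hb2 : 0 < b/2 := by linarith
  apply Integrable.mono' ((exp_neg_integrableOn_Ioi hconst hb2).const_mul (2/b))
  · exact (Continuous.mul continuous_id (Real.continuous_exp.comp (by continuity))).aestronglyMeasurable
  · filter_upwards [ae_restrict_mem measurableSet_Ioi] with t ht
    have h0 : 0 < t := lt_trans hconst_pos ht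
    rw [Real.norm_eq_abs, abs_of_nonneg (by positivity)]
    have hx : t ≤ (2/b) * Real.exp (b/2 * t) := by
      have h1 : b/2 * t + 1 ≤ Real.exp (b/2 * t) := Real.add_one_le_exp _
      have h2 : b/2 * t ≤ Real.exp (b/2 * t) := by linarith
      calc t = (2/b) * (b/2 * t) := by field_simp
        _ ≤ (2/b) * Real.exp (b/2 * t) := by
            apply mul_le_mul_of_nonneg_left h2; positivity
    calc t * Real.exp (-b * t) ≤ (2/b) * Real.exp (b/2 * t) * Real.exp (-b * t) := by
          apply mul_le_mul_of_nonneg_right hx (Real.exp_nonneg _)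
      _ = 2/b * Real.exp (-(b/2) * t) := by
          rw [mul_assoc, ← Real.exp_add]; ring_nf

lemma contOn_F (d : ℕ) (s : ℝ) (μ : ℂ) :
    ContinuousOn (fun t : ℝ =>
      Complex.exp (-(s:ℂ) * (cothR t : ℂ) + μ * (t:ℂ)) / ((Real.sinh t : ℂ))^d)
      (Set.Ioi hconst) := by
  have hne : ∀ t ∈ Set.Ioi hconst, Real.sinh t ≠ 0 := fun t ht =>
    (Real.sinh_pos_iff.mpr (lt_trans hconst_pos ht)).ne'
  apply ContinuousOn.div
  · apply Complex.continuous_exp.comp_continuousOn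
    apply ContinuousOn.add
    · apply ContinuousOn.mul continuousOn_const
      apply Complex.continuous_ofReal.comp_continuousOn
      exact ContinuousOn.div (Real.continuous_cosh.continuousOn)
        (Real.continuous_sinh.continuousOn) hne
    · exact (continuousOn_const.mul (Complex.continuous_ofReal.continuousOn))
  · exact ((Complex.continuous_ofReal.comp Real.continuous_sinh).pow d).continuousOn
  · intro t ht
    exact pow_ne_zero d (Complex.ofReal_ne_zero.mpr (hne t ht))

lemma integrable_F (d : ℕ) {s : ℝ} (hs : 0 ≤ s) (μ : ℂ) (hμ : μ.re < (d:ℝ)) :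
    IntegrableOn
      (fun t : ℝ => Complex.exp (-(s:ℂ) * (cothR t : ℂ) + μ * (t:ℂ)) / ((Real.sinh t : ℂ))^d)
      (Set.Ioi hconst) := by
  apply Integrable.mono'
    (((exp_neg_integrableOn_Ioi hconst (b := (d:ℝ) - μ.re) (by linarith)).const_mul (Kc⁻¹ ^ d)))
  · exact (contOn_F d s μ).aestronglyMeasurable measurableSet_Ioi
  · filter_upwards [ae_restrict_mem measurableSet_Ioi] with t ht
    have := norm_F d hs μ ht
    convert this using 2
    ring

theorem stmt1 (d : ℕ) (hd : 0 < d) (s : ℝ) (hs : 0 ≤ s) :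
    (∀ μ : ℂ, μ.re < (d : ℝ) → IntegrableOn
      (fun t : ℝ => Complex.exp (-(s:ℂ) * (cothR t : ℂ) + μ * (t:ℂ)) / ((Real.sinh t : ℂ))^d)
      (Set.Ioi hconst)) ∧
    DifferentiableOn ℂ (fun μ : ℂ => Iinf d μ s) {μ : ℂ | μ.re < (d : ℝ)} := by
  constructor
  · intro μ hμ; exact integrable_F d hs μ hμ
  · intro μ₀ hμ₀
    simp only [Set.mem_setOf_eq] at hμ₀
    set ε : ℝ := ((d:ℝ) - μ₀.re)/2 with hε
    have hεpos : 0 < ε := by simp only [hε]; linarith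
    set c : ℝ := μ₀.re + ε with hc
    have hcd : c < d := by simp only [hc, hε]; linarith
    have key := hasDerivAt_integral_of_dominated_loc_of_deriv_le (μ := volume.restrict (Set.Ioi hconst))
      (F := fun μ t => Complex.exp (-(s:ℂ) * (cothR t : ℂ) + μ * (t:ℂ)) / ((Real.sinh t : ℂ))^d)
      (F' := fun μ t => (t:ℂ) * (Complex.exp (-(s:ℂ) * (cothR t : ℂ) + μ * (t:ℂ)) / ((Real.sinh t : ℂ))^d))
      (x₀ := μ₀) (bound := fun t => Kc⁻¹ ^ d * (t * Real.exp (-((d:ℝ) - c) * t)))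
      (Metric.ball_mem_nhds μ₀ hεpos)
      (Filter.Eventually.of_forall fun μ =>
        (contOn_F d s μ).aestronglyMeasurable measurableSet_Ioi)
      (integrable_F d hs μ₀ hμ₀)
      ((Complex.continuous_ofReal.continuousOn.mul (contOn_F d s μ₀)).aestronglyMeasurable
        measurableSet_Ioi)
      ?_ (((int_t_exp (by linarith : (0:ℝ) < (d:ℝ) - c)).const_mul _)) ?_
    · exact (key.2.differentiableAt).differentiableWithinAt
    · -- bound
      filter_upwards [ae_restrict_mem measurableSet_Ioi] with t ht μ hμ
      have h0 : 0 < t := lt_trans hconst_pos ht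
      have hμre : μ.re ≤ c := by
        have := Complex.abs_re_le_norm (μ - μ₀)
        have hb : ‖μ - μ₀‖ < ε := by
          rwa [Metric.mem_ball, Complex.dist_eq] at hμ
        simp only [Complex.sub_re] at this
        have := abs_le.mp this
        simp only [hc]; linarith [this.1, this.2]
      rw [norm_mul, Complex.norm_real t, Real.norm_eq_abs, abs_of_pos h0]
      have h1 := norm_F d hs μ (t := t) ht
      have h2 : Real.exp ((μ.re - d) * t) ≤ Real.exp ((c - d) * t) := by
        apply Real.exp_le_exp.mpr; nlinarith
      have h3 : ‖Complex.exp (-(s:ℂ) * (cothR t : ℂ) + μ * (t:ℂ)) / ((Real.sinh t : ℂ))^d‖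
          ≤ Kc⁻¹ ^ d * Real.exp ((c - d) * t) := by
        refine h1.trans ?_
        apply mul_le_mul_of_nonneg_left h2 (pow_nonneg (inv_nonneg.mpr Kc_pos.le) d)
      calc t * ‖Complex.exp (-(s:ℂ) * (cothR t : ℂ) + μ * (t:ℂ)) / ((Real.sinh t : ℂ))^d‖
          ≤ t * (Kc⁻¹ ^ d * Real.exp ((c - d) * t)) := by
            exact mul_le_mul_of_nonneg_left h3 h0.le
        _ = Kc⁻¹ ^ d * (t * Real.exp (-((d:ℝ) - c) * t)) := by ring_nf
    · -- differentiability in μ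
      filter_upwards [ae_restrict_mem measurableSet_Ioi] with t ht μ hμ
      have hg : HasDerivAt (fun μ : ℂ => -(s:ℂ) * (cothR t : ℂ) + μ * (t:ℂ)) (t:ℂ) μ := by
        simpa using ((hasDerivAt_id μ).mul_const (t:ℂ)).const_add (-(s:ℂ) * (cothR t : ℂ))
      have he := hg.cexp
      have := he.div_const (((Real.sinh t : ℂ))^d)
      convert this using 1
      · rfl
      · ring
  done
end

section
/- For every positive integer d, every s ≥ 0 and every μ ∈ ℂ with Re(μ) < d, the change of variables ζ = coth(t) − 1 gives the identity I∞(μ,s) = e^{−s}·∫₀³ e^{−s·ζ}·(ζ+2)^{(d−2+μ)/2}·ζ^{(d−2−μ)/2} dζ, where both integrals converge absolutely. -/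
open MeasureTheory

/-- `a ^ z := exp (z * log a)` for a real base `a > 0` and complex exponent `z`. -/
noncomputable def cpowR (a : ℝ) (z : ℂ) : ℂ := Complex.exp (z * Real.log a)

noncomputable def phiCV (ζ : ℝ) : ℝ := (1/2) * (Real.log (ζ+2) - Real.log ζ)

lemma phiCV_deriv {ζ : ℝ} (hζ : 0 < ζ) :
    HasDerivAt phiCV ((1/2) * ((ζ+2)⁻¹ - ζ⁻¹)) ζ := by
  have h1 : HasDerivAt (fun x : ℝ => Real.log (x+2)) ((ζ+2)⁻¹) ζ := by
    simpa [Function.comp_def] using (Real.hasDerivAt_log (by linarith : ζ + 2 ≠ 0)).comp ζ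
      ((hasDerivAt_id ζ).add_const 2)
  have h2 : HasDerivAt Real.log ζ⁻¹ ζ := Real.hasDerivAt_log hζ.ne'
  have h3 : HasDerivAt (fun x : ℝ => (1/2) * (Real.log (x+2) - Real.log x))
      ((1/2) * ((ζ+2)⁻¹ - ζ⁻¹)) ζ := (h1.sub h2).const_mul (1/2 : ℝ)
  exact h3

lemma phiCV_lt {a b : ℝ} (ha : 0 < a) (hab : a < b) : phiCV b < phiCV a := by
  have hb : 0 < b := ha.trans hab
  have h1 : Real.log (b+2) - Real.log b = Real.log ((b+2)/b) :=
    (Real.log_div (by linarith) hb.ne').symm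
  have h2 : Real.log (a+2) - Real.log a = Real.log ((a+2)/a) :=
    (Real.log_div (by linarith) ha.ne').symm
  have h3 : (b+2)/b < (a+2)/a := by rw [div_lt_div_iff₀ hb ha]; nlinarith
  have h4 := Real.log_lt_log (by positivity) h3
  simp only [phiCV, h1, h2]
  linarith

lemma phiCV_image : phiCV '' Set.Ioo 0 3 = Set.Ioi hconst := by
  ext t
  constructor
  · rintro ⟨ζ, ⟨h0, h3⟩, rfl⟩
    have h1 : phiCV ζ = (1/2) * Real.log ((ζ+2)/ζ) := by
      rw [phiCV, Real.log_div (by linarith) h0.ne']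
    have h2 : (5/3 : ℝ) < (ζ+2)/ζ := by rw [lt_div_iff₀ h0]; linarith
    have h4 := Real.log_lt_log (by norm_num) h2
    simp only [Set.mem_Ioi, hconst, h1]
    linarith
  · intro ht
    have ht' : hconst < t := ht
    set E := Real.exp (2*t) with hE
    have hE1 : (5/3 : ℝ) < E := by
      have h5 : Real.exp (2*hconst) < Real.exp (2*t) := Real.exp_lt_exp.2 (by linarith)
      have h2h : Real.exp (2*hconst) = 5/3 := by
        rw [hconst, show 2*((1/2)*Real.log (5/3)) = Real.log (5/3) by ring,
          Real.exp_log (by norm_num)]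
      rw [h2h] at h5; exact h5
    have hEm : (0:ℝ) < E - 1 := by linarith
    set ζ := 2/(E-1) with hζdef
    have hζ0 : 0 < ζ := by positivity
    have hζ3 : ζ < 3 := by rw [hζdef, div_lt_iff₀ hEm]; linarith
    refine ⟨ζ, ⟨hζ0, hζ3⟩, ?_⟩
    have hratio : (ζ+2)/ζ = E := by
      rw [hζdef]; field_simp; ring
    have h6 : phiCV ζ = (1/2) * Real.log ((ζ+2)/ζ) := by
      rw [phiCV, Real.log_div (by linarith) hζ0.ne']
    rw [h6, hratio, hE, Real.log_exp]; ring

lemma sinh_phiCV {ζ : ℝ} (h0 : 0 < ζ) :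
    Real.sinh (phiCV ζ) = Real.exp (-(1/2)*(Real.log (ζ+2) + Real.log ζ)) := by
  set A := Real.log (ζ+2) with hA
  set B := Real.log ζ with hB
  have hP : Real.exp (A/2) * Real.exp (A/2) = ζ + 2 := by
    rw [← Real.exp_add, show A/2 + A/2 = A by ring, hA, Real.exp_log (by linarith)]
  have hQ : Real.exp (B/2) * Real.exp (B/2) = ζ := by
    rw [← Real.exp_add, show B/2 + B/2 = B by ring, hB, Real.exp_log h0]
  have hPpos : 0 < Real.exp (A/2) := Real.exp_pos _
  have hQpos : 0 < Real.exp (B/2) := Real.exp_pos _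
  have e1 : phiCV ζ = A/2 - B/2 := by rw [phiCV]; ring
  rw [e1, Real.sinh_eq]
  rw [show -(A/2 - B/2) = B/2 - A/2 by ring, Real.exp_sub, Real.exp_sub,
    show -(1/2)*(A + B) = -(A/2) + -(B/2) by ring, Real.exp_add, Real.exp_neg, Real.exp_neg]
  have key : Real.exp (A/2) * Real.exp (A/2) - Real.exp (B/2) * Real.exp (B/2) = 2 := by
    rw [hP, hQ]; ring
  field_simp
  linear_combination key

lemma coth_phiCV {ζ : ℝ} (h0 : 0 < ζ) : cothR (phiCV ζ) = ζ + 1 := by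
  set A := Real.log (ζ+2) with hA
  set B := Real.log ζ with hB
  have hP : Real.exp (A/2) * Real.exp (A/2) = ζ + 2 := by
    rw [← Real.exp_add, show A/2 + A/2 = A by ring, hA, Real.exp_log (by linarith)]
  have hQ : Real.exp (B/2) * Real.exp (B/2) = ζ := by
    rw [← Real.exp_add, show B/2 + B/2 = B by ring, hB, Real.exp_log h0]
  have hPpos : 0 < Real.exp (A/2) := Real.exp_pos _
  have hQpos : 0 < Real.exp (B/2) := Real.exp_pos _
  have e1 : phiCV ζ = A/2 - B/2 := by rw [phiCV]; ring
  have hsinh : Real.sinh (phiCV ζ) = Real.exp (-(1/2)*(A + B)) := sinh_phiCV h0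
  have hcosh : Real.cosh (phiCV ζ) = (ζ+1) * Real.exp (-(1/2)*(A + B)) := by
    rw [e1, Real.cosh_eq, show -(A/2 - B/2) = B/2 - A/2 by ring, Real.exp_sub, Real.exp_sub]
    have key : Real.exp (A/2) * Real.exp (A/2) + Real.exp (B/2) * Real.exp (B/2) = 2*ζ + 2 := by
      rw [hP, hQ]; ring
    rw [show -(1/2)*(A + B) = -(A/2) + -(B/2) by ring, Real.exp_add, Real.exp_neg, Real.exp_neg]
    field_simp
    linear_combination key
  rw [cothR, hsinh, hcosh, mul_div_assoc, div_self (Real.exp_pos _).ne', mul_one]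

lemma pointwiseCV (d : ℕ) (s : ℝ) (μ : ℂ) {ζ : ℝ} (h0 : 0 < ζ) :
    |(1/2) * ((ζ+2)⁻¹ - ζ⁻¹)| •
      (Complex.exp (-(s:ℂ) * (cothR (phiCV ζ) : ℂ) + μ * ((phiCV ζ : ℝ):ℂ)) /
        ((Real.sinh (phiCV ζ) : ℂ))^d)
    = Complex.exp (-(s:ℂ)) * (Complex.exp (-(s:ℂ) * (ζ:ℂ)) * cpowR (ζ + 2) (((d:ℂ) - 2 + μ)/2)
        * cpowR ζ (((d:ℂ) - 2 - μ)/2)) := by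
  set A := Real.log (ζ+2) with hA
  set B := Real.log ζ with hB
  have habs : |(1/2) * ((ζ+2)⁻¹ - ζ⁻¹)| = Real.exp (-(A + B)) := by
    have h1 : Real.exp (A + B) = (ζ+2) * ζ := by
      rw [Real.exp_add, hA, hB, Real.exp_log (by linarith), Real.exp_log h0]
    have h2 : (1/2) * ((ζ+2)⁻¹ - ζ⁻¹) = -((ζ+2) * ζ)⁻¹ := by
      field_simp
      ring
    rw [h2, abs_neg, abs_inv, ← h1, Real.exp_neg, abs_of_pos (Real.exp_pos _)]
  have e1 : phiCV ζ = (1/2) * (A - B) := by rw [phiCV]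
  rw [habs, coth_phiCV h0, sinh_phiCV h0, e1]
  have hpow : ((Real.exp (-(1/2)*(A+B)) : ℝ) : ℂ)^d
      = Complex.exp ((d:ℂ) * ((-(1/2)*(A+B) : ℝ) : ℂ)) := by
    rw [Complex.ofReal_exp, ← Complex.exp_nat_mul]
  rw [Complex.real_smul, Complex.ofReal_exp, hpow, div_eq_mul_inv, ← Complex.exp_neg]
  unfold cpowR
  rw [← hA, ← hB]
  simp only [← Complex.exp_add]
  congr 1
  push_cast
  ring

theorem stmt2 (d : ℕ) (hd : 0 < d) (s : ℝ) (hs : 0 ≤ s) (μ : ℂ) (hμ : μ.re < (d : ℝ)) :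
    IntegrableOn
      (fun t : ℝ => Complex.exp (-(s:ℂ) * (cothR t : ℂ) + μ * (t:ℂ)) / ((Real.sinh t : ℂ))^d)
      (Set.Ioi hconst) ∧
    IntegrableOn
      (fun ζ : ℝ => Complex.exp (-(s:ℂ) * (ζ:ℂ)) * cpowR (ζ + 2) (((d:ℂ) - 2 + μ)/2)
        * cpowR ζ (((d:ℂ) - 2 - μ)/2))
      (Set.Ioo (0:ℝ) 3) ∧
    Iinf d μ s = Complex.exp (-(s:ℂ)) *
      ∫ ζ in Set.Ioo (0:ℝ) 3, Complex.exp (-(s:ℂ) * (ζ:ℂ)) * cpowR (ζ + 2) (((d:ℂ) - 2 + μ)/2)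
        * cpowR ζ (((d:ℂ) - 2 - μ)/2) := by
  have hb : (-1:ℝ) < ((d:ℝ) - 2 - μ.re)/2 := by linarith
  set G : ℝ → ℂ := fun ζ : ℝ => Complex.exp (-(s:ℂ) * (ζ:ℂ)) * cpowR (ζ + 2) (((d:ℂ) - 2 + μ)/2)
        * cpowR ζ (((d:ℂ) - 2 - μ)/2) with hGdef
  set b : ℝ := ((d:ℝ) - 2 - μ.re)/2 with hbdef
  set C : ℝ := Real.exp (|((d:ℝ) - 2 + μ.re)/2| * Real.log 5) with hCdef
  have hCpos : 0 < C := Real.exp_pos _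
  have hdom : IntegrableOn (fun ζ : ℝ => C * ζ ^ b) (Set.Ioo 0 3) := by
    have h1 : IntervalIntegrable (fun x : ℝ => x ^ b) volume 0 3 := intervalIntegral.intervalIntegrable_rpow' hb
    have h2 : IntegrableOn (fun x : ℝ => x ^ b) (Set.Ioc 0 3) :=
      (intervalIntegrable_iff_integrableOn_Ioc_of_le (by norm_num)).1 h1
    exact (h2.mono_set Set.Ioo_subset_Ioc_self).const_mul C
  have hre1 : ((((d:ℂ) - 2 + μ)/2)).re = ((d:ℝ) - 2 + μ.re)/2 := by
    have : ((d:ℂ) - 2 + μ)/2 = Complex.ofReal (((d:ℝ) - 2)/2) + μ/2 := by push_cast; ring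
    rw [this]
    simp [Complex.div_re]
    ring
  have hre2 : ((((d:ℂ) - 2 - μ)/2)).re = b := by
    have : ((d:ℂ) - 2 - μ)/2 = Complex.ofReal (((d:ℝ) - 2)/2) - μ/2 := by push_cast; ring
    rw [this, hbdef]
    simp [Complex.div_re]
    ring
  have hGmeas : AEStronglyMeasurable G (volume.restrict (Set.Ioo 0 3)) := by
    refine Measurable.aestronglyMeasurable ?_
    rw [hGdef]
    unfold cpowR
    apply Measurable.mul
    apply Measurable.mul
    · exact Complex.measurable_exp.comp (measurable_const.mul Complex.measurable_ofReal)
    · exact Complex.measurable_exp.comp (measurable_const.mul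
        (Complex.measurable_ofReal.comp (Real.measurable_log.comp (measurable_id.add_const 2))))
    · exact Complex.measurable_exp.comp (measurable_const.mul
        (Complex.measurable_ofReal.comp Real.measurable_log))
  have hbound : ∀ᵐ ζ ∂(volume.restrict (Set.Ioo (0:ℝ) 3)), ‖G ζ‖ ≤ ‖C * ζ ^ b‖ := by
    filter_upwards [ae_restrict_mem measurableSet_Ioo] with ζ hζ
    have h0 : (0:ℝ) < ζ := hζ.1
    have h3 : ζ < 3 := hζ.2
    have hn1 : ‖Complex.exp (-(s:ℂ) * (ζ:ℂ))‖ = Real.exp (-(s*ζ)) := by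
      rw [Complex.norm_exp]
      congr 1
      have : -(s:ℂ) * (ζ:ℂ) = ((-(s*ζ) : ℝ) : ℂ) := by push_cast; ring
      rw [this, Complex.ofReal_re]
    have hn2 : ‖cpowR (ζ + 2) (((d:ℂ) - 2 + μ)/2)‖
        = Real.exp ((((d:ℝ) - 2 + μ.re)/2) * Real.log (ζ+2)) := by
      rw [cpowR, Complex.norm_exp]
      congr 1
      rw [Complex.mul_re, Complex.ofReal_re, Complex.ofReal_im, hre1]
      ring
    have hn3 : ‖cpowR ζ (((d:ℂ) - 2 - μ)/2)‖ = ζ ^ b := by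
      rw [cpowR, Complex.norm_exp, Real.rpow_def_of_pos h0]
      congr 1
      rw [Complex.mul_re, Complex.ofReal_re, Complex.ofReal_im, hre2]
      ring
    have hL0 : 0 ≤ Real.log (ζ+2) := Real.log_nonneg (by linarith)
    have hL5 : Real.log (ζ+2) ≤ Real.log 5 := Real.log_le_log (by linarith) (by linarith)
    have hE2 : Real.exp ((((d:ℝ) - 2 + μ.re)/2) * Real.log (ζ+2)) ≤ C := by
      rw [hCdef]
      apply Real.exp_le_exp.2
      calc (((d:ℝ) - 2 + μ.re)/2) * Real.log (ζ+2)
          ≤ |((d:ℝ) - 2 + μ.re)/2| * Real.log (ζ+2) :=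
            mul_le_mul_of_nonneg_right (le_abs_self _) hL0
        _ ≤ |((d:ℝ) - 2 + μ.re)/2| * Real.log 5 :=
            mul_le_mul_of_nonneg_left hL5 (abs_nonneg _)
    have hE1 : Real.exp (-(s*ζ)) ≤ 1 := Real.exp_le_one_iff.2 (by nlinarith)
    have hrpow : (0:ℝ) ≤ ζ ^ b := Real.rpow_nonneg h0.le b
    have hR : ‖C * ζ ^ b‖ = C * ζ ^ b := by
      rw [Real.norm_eq_abs, abs_of_nonneg (by positivity)]
    rw [hR, hGdef]
    simp only [norm_mul]
    rw [hn1, hn2, hn3]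
    calc Real.exp (-(s*ζ)) * Real.exp ((((d:ℝ) - 2 + μ.re)/2) * Real.log (ζ+2)) * ζ ^ b
        ≤ 1 * C * ζ ^ b := by
          apply mul_le_mul_of_nonneg_right _ hrpow
          exact mul_le_mul hE1 hE2 (Real.exp_pos _).le (by norm_num)
      _ = C * ζ ^ b := by ring
  have hGint : IntegrableOn G (Set.Ioo (0:ℝ) 3) := MeasureTheory.Integrable.mono hdom hGmeas hbound
  have hmeas : MeasurableSet (Set.Ioo (0:ℝ) 3) := measurableSet_Ioo
  have hderiv : ∀ x ∈ Set.Ioo (0:ℝ) 3,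
      HasDerivWithinAt phiCV ((1/2) * ((x+2)⁻¹ - x⁻¹)) (Set.Ioo (0:ℝ) 3) x :=
    fun x hx => (phiCV_deriv hx.1).hasDerivWithinAt
  have hinj : Set.InjOn phiCV (Set.Ioo (0:ℝ) 3) := by
    intro a ha b' hb' hab
    by_contra hne
    rcases lt_or_gt_of_ne hne with h|h
    · exact absurd hab (phiCV_lt ha.1 h).ne'
    · exact absurd hab (phiCV_lt hb'.1 h).ne
  have himg := phiCV_image
  refine ⟨?_, hGint, ?_⟩
  · rw [← himg, integrableOn_image_iff_integrableOn_abs_deriv_smul hmeas hderiv hinj]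
    have h5 : IntegrableOn (fun x : ℝ => Complex.exp (-(s:ℂ)) * G x) (Set.Ioo (0:ℝ) 3) :=
      hGint.const_mul _
    exact IntegrableOn.congr_fun h5 (fun ζ hζ => (pointwiseCV d s μ hζ.1).symm) hmeas
  · rw [Iinf, ← himg, integral_image_eq_integral_abs_deriv_smul hmeas hderiv hinj,
      setIntegral_congr_fun hmeas (fun ζ hζ => pointwiseCV d s μ hζ.1),
      integral_const_mul]
end

section
/- For every positive integer d, every μ ∈ ℂ and every s > 0, the change of variables ζ = coth(t) gives the identity I₀(μ,s) = ∫₄^∞ e^{−s·ζ}·(ζ²−1)^{(d−2)/2}·(1 + 2/(ζ−1))^{μ/2} dζ, where both integrals converge absolutely. -/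
open MeasureTheory

noncomputable def I0 (d : ℕ) (μ : ℂ) (s : ℝ) : ℂ :=
  ∫ t in Set.Ioo (0:ℝ) hconst,
    Complex.exp (-(s:ℂ) * (cothR t : ℂ) + μ * (t:ℂ)) / ((Real.sinh t : ℂ))^d

lemma exp_two_hconst : Real.exp (2 * hconst) = 5/3 := by
  unfold hconst
  rw [show (2:ℝ) * ((1/2) * Real.log (5/3)) = Real.log (5/3) by ring,
    Real.exp_log (by norm_num)]

lemma cothR_eq {t : ℝ} (ht : 0 < t) :
    cothR t = (Real.exp (2*t) + 1) / (Real.exp (2*t) - 1) := by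
  have hE : (1:ℝ) < Real.exp t := by rw [Real.one_lt_exp_iff]; exact ht
  have h2 : Real.exp (2*t) = Real.exp t * Real.exp t := by
    rw [← Real.exp_add]; ring_nf
  unfold cothR
  rw [Real.cosh_eq, Real.sinh_eq, Real.exp_neg, h2]
  have h0 : Real.exp t ≠ 0 := by positivity
  have h1 : Real.exp t - (Real.exp t)⁻¹ ≠ 0 := by
    have : (Real.exp t)⁻¹ < 1 := by
      rw [inv_lt_one_iff₀]; right; exact hE
    nlinarith [Real.exp_pos t]
  have h3 : Real.exp t * Real.exp t - 1 ≠ 0 := by nlinarith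
  field_simp
  try ring

lemma cothR_hconst : cothR hconst = 4 := by
  rw [cothR_eq hconst_pos, exp_two_hconst]; norm_num

lemma hasDerivAt_cothR {t : ℝ} (ht : Real.sinh t ≠ 0) :
    HasDerivAt cothR (-(1 / Real.sinh t ^ 2)) t := by
  have h := (Real.hasDerivAt_cosh t).div (Real.hasDerivAt_sinh t) ht
  refine (h.congr_deriv ?_ : HasDerivAt cothR _ t)
  have := Real.cosh_sq_sub_sinh_sq t
  rw [neg_div', div_left_inj' (pow_ne_zero 2 ht)]
  nlinarith [this]

lemma strictAntiOn_cothR : StrictAntiOn cothR (Set.Ioc 0 hconst) := by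
  apply strictAntiOn_of_deriv_neg (convex_Ioc _ _)
  · apply ContinuousOn.div Real.continuous_cosh.continuousOn
      Real.continuous_sinh.continuousOn
    intro x hx
    exact ne_of_gt (Real.sinh_pos_iff.2 hx.1)
  · intro x hx
    rw [interior_Ioc] at hx
    have hsx : Real.sinh x ≠ 0 := ne_of_gt (Real.sinh_pos_iff.2 hx.1)
    rw [(hasDerivAt_cothR hsx).deriv]
    have : 0 < Real.sinh x ^ 2 := by positivity
    have : 0 < 1 / Real.sinh x ^ 2 := by positivity
    linarith

lemma image_cothR : cothR '' Set.Ioo 0 hconst = Set.Ioi 4 := by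
  ext ζ
  constructor
  · rintro ⟨t, ht, rfl⟩
    have h := strictAntiOn_cothR ⟨ht.1, ht.2.le⟩ ⟨hconst_pos, le_refl _⟩ ht.2
    rw [cothR_hconst] at h
    exact h
  · intro hζ
    have hζ4 : (4:ℝ) < ζ := hζ
    have hden : (0:ℝ) < ζ - 1 := by linarith
    set r : ℝ := (ζ+1)/(ζ-1) with hr
    have hr1 : 1 < r := by
      rw [hr, lt_div_iff₀ hden]; linarith
    have hr53 : r < 5/3 := by
      rw [hr, div_lt_iff₀ hden]; linarith
    have hlogpos : 0 < Real.log r := Real.log_pos hr1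
    refine ⟨(1/2) * Real.log r, ⟨by linarith, ?_⟩, ?_⟩
    · have : Real.log r < Real.log (5/3) := Real.log_lt_log (by linarith) hr53
      unfold hconst; linarith
    · have htpos : 0 < (1/2) * Real.log r := by linarith
      rw [cothR_eq htpos,
        show 2 * ((1/2) * Real.log r) = Real.log r by ring,
        Real.exp_log (by linarith)]
      rw [hr]
      have hne : ζ - 1 ≠ 0 := ne_of_gt hden
      field_simp
      ring

lemma key_eq (d : ℕ) (μ : ℂ) (s : ℝ) {t : ℝ} (ht : t ∈ Set.Ioo 0 hconst) :
    |(-(1 / Real.sinh t ^ 2))| • (Complex.exp (-(s:ℂ) * ((cothR t : ℝ):ℂ))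
        * ((((cothR t)^2 - 1) ^ (((d:ℝ) - 2)/2) : ℝ) : ℂ)
        * cpowR (1 + 2/(cothR t - 1)) (μ/2))
      = Complex.exp (-(s:ℂ) * ((cothR t : ℝ):ℂ) + μ * (t:ℂ)) / ((Real.sinh t : ℂ))^d := by
  have ha : 0 < Real.sinh t := Real.sinh_pos_iff.2 ht.1
  set a : ℝ := Real.sinh t with hadef
  -- ζ² - 1 = (a²)⁻¹
  have h1 : (cothR t)^2 - 1 = (a^2)⁻¹ := by
    unfold cothR
    rw [div_pow, Real.cosh_sq, ← hadef]
    field_simp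
    ring
  -- 1 + 2/(ζ - 1) = exp (2t)
  have h2 : 1 + 2/(cothR t - 1) = Real.exp (2*t) := by
    unfold cothR
    have hcs : Real.cosh t - Real.sinh t = Real.exp (-t) := Real.cosh_sub_sinh t
    have hca : Real.cosh t + Real.sinh t = Real.exp t := Real.cosh_add_sinh t
    have hsub : Real.cosh t / Real.sinh t - 1 = Real.exp (-t) / a := by
      rw [← hadef]; field_simp; linarith
    rw [hsub]
    have hE : Real.exp (-t) ≠ 0 := Real.exp_ne_zero _
    rw [div_div_eq_mul_div, Real.exp_neg]
    have h2t : Real.exp (2*t) = Real.exp t * Real.exp t := by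
      rw [← Real.exp_add]; ring_nf
    have he0 : Real.exp t ≠ 0 := Real.exp_ne_zero _
    have hs2 : 2*a = Real.exp t - Real.exp (-t) := by
      rw [hadef, Real.sinh_eq]; ring
    have hprod : Real.exp t * Real.exp (-t) = 1 := by
      rw [← Real.exp_add]; simp
    field_simp [h2t]
    nlinarith [hs2, hprod]
  -- rpow computation
  have hm2 : (a^2)⁻¹ = a ^ ((-2 : ℝ)) := by
    rw [show ((-2:ℝ)) = ((-2 : ℤ) : ℝ) by norm_num, Real.rpow_intCast, zpow_neg]
    norm_num
  have h3 : ((a^2)⁻¹ : ℝ) ^ (((d:ℝ) - 2)/2) = a ^ ((2:ℝ) - d) := by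
    rw [hm2, ← Real.rpow_mul ha.le]
    congr 1
    ring
  have h4 : cpowR (Real.exp (2*t)) (μ/2) = Complex.exp (μ * t) := by
    unfold cpowR
    rw [Real.log_exp]
    congr 1
    push_cast
    ring
  have h5 : ((a^2)⁻¹ : ℝ) * a ^ ((2:ℝ) - d) = (a^d)⁻¹ := by
    rw [hm2, ← Real.rpow_add ha,
      show (-2:ℝ) + ((2:ℝ) - d) = -(d:ℝ) by ring,
      Real.rpow_neg ha.le, Real.rpow_natCast]
  rw [h1, h2, h3, h4]
  rw [abs_neg, abs_of_pos (by positivity : (0:ℝ) < 1/Real.sinh t^2)]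
  rw [Complex.real_smul, Complex.exp_add]
  have hcast : ((1/Real.sinh t^2 : ℝ):ℂ) * ((a ^ ((2:ℝ)-d) : ℝ):ℂ)
      = (((a^d)⁻¹ : ℝ) : ℂ) := by
    rw [← Complex.ofReal_mul]
    congr 1
    rw [one_div, ← hadef]
    exact h5
  have h6 : (1/Real.sinh t^2 : ℝ) * (a ^ ((2:ℝ) - d)) * a^d = 1 := by
    rw [one_div, ← hadef, h5]
    exact inv_mul_cancel₀ (pow_ne_zero d (ne_of_gt ha))
  have hane : ((Real.sinh t : ℂ))^d ≠ 0 :=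
    pow_ne_zero _ (Complex.ofReal_ne_zero.2 (ne_of_gt ha))
  rw [eq_div_iff hane]
  have h7 : ((Real.sinh t:ℂ))^d = ((a^d : ℝ) : ℂ) := by rw [← hadef]; push_cast; ring
  rw [h7]
  have h8 : ((1/Real.sinh t^2 : ℝ) : ℂ) * ((a ^ ((2:ℝ) - d) : ℝ) : ℂ) * ((a^d : ℝ):ℂ) = 1 := by
    rw [← Complex.ofReal_mul, ← Complex.ofReal_mul, h6, Complex.ofReal_one]
  linear_combination (Complex.exp (-(s:ℂ) * ((cothR t : ℝ):ℂ)) * Complex.exp (μ * (t:ℂ))) * h8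

lemma pow_div_factorial_le_exp (d : ℕ) {x : ℝ} (hx : 0 ≤ x) :
    x ^ d / d.factorial ≤ Real.exp x := by
  calc x ^ d / d.factorial
      ≤ ∑ i ∈ Finset.range (d+1), x ^ i / i.factorial := by
        apply Finset.single_le_sum (f := fun i => x ^ i / (i.factorial : ℝ))
          (fun i _ => by positivity) (Finset.self_mem_range_succ d)
    _ ≤ Real.exp x := Real.sum_le_exp_of_nonneg hx _

lemma integrableF (d : ℕ) (μ : ℂ) (s : ℝ) (hs : 0 < s) :
    IntegrableOn
      (fun t : ℝ => Complex.exp (-(s:ℂ) * (cothR t : ℂ) + μ * (t:ℂ)) / ((Real.sinh t : ℂ))^d)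
      (Set.Ioo (0:ℝ) hconst) := by
  apply Measure.integrableOn_of_bounded
    (M := Real.exp (|μ.re| * hconst) * (d.factorial / s^d))
  · exact (measure_Ioo_lt_top).ne
  · apply Measurable.aestronglyMeasurable
    apply Measurable.div
    · apply Complex.measurable_exp.comp
      apply Measurable.add
      · apply Measurable.mul measurable_const
        exact Complex.measurable_ofReal.comp
          ((Real.continuous_cosh.measurable).div Real.continuous_sinh.measurable)
      · exact measurable_const.mul Complex.measurable_ofReal
    · exact (Complex.measurable_ofReal.comp Real.continuous_sinh.measurable).pow_const d
  · filter_upwards [ae_restrict_mem measurableSet_Ioo] with t ht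
    have ha : 0 < Real.sinh t := Real.sinh_pos_iff.2 ht.1
    have hc : 1 ≤ Real.cosh t := Real.one_le_cosh t
    -- norm computation
    have hre : (-(s:ℂ) * (cothR t : ℂ) + μ * (t:ℂ)).re = -s * cothR t + μ.re * t := by
      simp [Complex.add_re, Complex.mul_re]
    rw [norm_div, Complex.norm_exp, hre, norm_pow,
      Complex.norm_real, Real.norm_eq_abs, abs_of_pos ha]
    have hcoth : 1 / Real.sinh t ≤ cothR t := by
      unfold cothR
      gcongr
    have hexp1 : Real.exp (-s * cothR t + μ.re * t)
        ≤ Real.exp (|μ.re| * hconst) * Real.exp (-(s * (1 / Real.sinh t))) := by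
      rw [← Real.exp_add]
      apply Real.exp_le_exp.2
      have h1 : μ.re * t ≤ |μ.re| * hconst := by
        have := le_abs_self μ.re
        have habs : 0 ≤ |μ.re| := abs_nonneg _
        nlinarith [ht.1, ht.2, le_abs_self μ.re, abs_nonneg μ.re]
      nlinarith [hcoth, hs.le, mul_le_mul_of_nonneg_left hcoth hs.le]
    have hexp2 : Real.exp (-(s * (1 / Real.sinh t))) * (1 / Real.sinh t) ^ d
        ≤ d.factorial / s ^ d := by
      set u : ℝ := 1 / Real.sinh t with hu
      have hupos : 0 < u := by positivity
      have hk := pow_div_factorial_le_exp d (by positivity : (0:ℝ) ≤ s * u)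
      rw [mul_pow] at hk
      have hk2 : s ^ d * u ^ d ≤ d.factorial * Real.exp (s * u) := by
        rw [div_le_iff₀ (by positivity)] at hk
        nlinarith [hk]
      rw [Real.exp_neg, inv_mul_le_iff₀ (Real.exp_pos _)]
      have h3 : u ^ d * s ^ d ≤ Real.exp (s*u) * d.factorial := by nlinarith [hk2]
      calc u ^ d = u ^ d * s ^ d / s ^ d := by field_simp
        _ ≤ Real.exp (s*u) * d.factorial / s ^ d := by gcongr
        _ = Real.exp (s*u) * (d.factorial / s ^ d) := by ring
    calc Real.exp (-s * cothR t + μ.re * t) / Real.sinh t ^ d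
        ≤ Real.exp (|μ.re| * hconst) * Real.exp (-(s * (1 / Real.sinh t))) / Real.sinh t ^ d := by
          gcongr
      _ = Real.exp (|μ.re| * hconst) * (Real.exp (-(s * (1 / Real.sinh t))) * (1/Real.sinh t) ^ d) := by
          rw [div_pow, one_pow]
          field_simp
      _ ≤ Real.exp (|μ.re| * hconst) * (d.factorial / s ^ d) := by
          gcongr

theorem stmt4 (d : ℕ) (hd : 0 < d) (μ : ℂ) (s : ℝ) (hs : 0 < s) :
    IntegrableOn
      (fun t : ℝ => Complex.exp (-(s:ℂ) * (cothR t : ℂ) + μ * (t:ℂ)) / ((Real.sinh t : ℂ))^d)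
      (Set.Ioo (0:ℝ) hconst) ∧
    IntegrableOn
      (fun ζ : ℝ => Complex.exp (-(s:ℂ) * (ζ:ℂ))
        * (((ζ^2 - 1) ^ (((d:ℝ) - 2)/2) : ℝ) : ℂ) * cpowR (1 + 2/(ζ - 1)) (μ/2))
      (Set.Ioi (4:ℝ)) ∧
    I0 d μ s = ∫ ζ in Set.Ioi (4:ℝ), Complex.exp (-(s:ℂ) * (ζ:ℂ))
        * (((ζ^2 - 1) ^ (((d:ℝ) - 2)/2) : ℝ) : ℂ) * cpowR (1 + 2/(ζ - 1)) (μ/2) := by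
  set g : ℝ → ℂ := fun ζ : ℝ => Complex.exp (-(s:ℂ) * (ζ:ℂ))
        * (((ζ^2 - 1) ^ (((d:ℝ) - 2)/2) : ℝ) : ℂ) * cpowR (1 + 2/(ζ - 1)) (μ/2) with hg
  set F : ℝ → ℂ := fun t : ℝ =>
    Complex.exp (-(s:ℂ) * (cothR t : ℂ) + μ * (t:ℂ)) / ((Real.sinh t : ℂ))^d with hF
  have hmeas : MeasurableSet (Set.Ioo (0:ℝ) hconst) := measurableSet_Ioo
  have hderiv : ∀ x ∈ Set.Ioo (0:ℝ) hconst,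
      HasDerivWithinAt cothR (-(1 / Real.sinh x ^ 2)) (Set.Ioo (0:ℝ) hconst) x :=
    fun x hx => (hasDerivAt_cothR (ne_of_gt (Real.sinh_pos_iff.2 hx.1))).hasDerivWithinAt
  have hinj : Set.InjOn cothR (Set.Ioo (0:ℝ) hconst) :=
    (strictAntiOn_cothR.injOn).mono Set.Ioo_subset_Ioc_self
  have hFint : IntegrableOn F (Set.Ioo (0:ℝ) hconst) := integrableF d μ s hs
  have hkey : ∀ t ∈ Set.Ioo (0:ℝ) hconst, |(-(1 / Real.sinh t ^ 2))| • g (cothR t) = F t := by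
    intro t ht
    exact key_eq d μ s ht
  refine ⟨hFint, ?_, ?_⟩
  · rw [← image_cothR,
      integrableOn_image_iff_integrableOn_abs_deriv_smul hmeas hderiv hinj g]
    exact hFint.congr_fun (fun t ht => (hkey t ht).symm) hmeas
  · rw [← image_cothR,
      integral_image_eq_integral_abs_deriv_smul hmeas hderiv hinj g]
    unfold I0
    exact (setIntegral_congr_fun hmeas (fun t ht => hkey t ht)).symm
end

section
/- Let q ≥ 1 be an integer, b > 0, t ∈ [0,1) and C > 0, and let (τ_n)_{n∈ℕ} be a real sequence with |τ_n| ≤ C·(1+n)^t for all n. Then the set of natural numbers n such that L^n_{q−1}(b/2) ≠ 0 and (n − b/2 − τ_n)·L^n_{q−1}(b/2) + b·(L^n_{q−1})'(b/2) = 0 is finite. -/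
open Finset Filter

/-- The generalized Laguerre polynomial
`L^n_{q-1}(x) = Σ_{i=0}^{q-1} C(q-1+n, q-1-i) (-x)^i / i!`. -/
noncomputable def lagPoly (q n : ℕ) (x : ℝ) : ℝ :=
  ∑ i ∈ Finset.range q, (Nat.choose (q - 1 + n) (q - 1 - i) : ℝ) * (-x)^i / (Nat.factorial i : ℝ)

lemma lag_hasDerivAt (q n : ℕ) (x : ℝ) :
    HasDerivAt (lagPoly q n)
      (∑ i ∈ Finset.range q,
        (Nat.choose (q - 1 + n) (q - 1 - i) : ℝ) * ((i : ℝ) * (-x) ^ (i - 1) * (-1)) /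
          (Nat.factorial i : ℝ)) x := by
  have h : ∀ i ∈ Finset.range q,
      HasDerivAt (fun y : ℝ =>
          (Nat.choose (q - 1 + n) (q - 1 - i) : ℝ) * (-y) ^ i / (Nat.factorial i : ℝ))
        ((Nat.choose (q - 1 + n) (q - 1 - i) : ℝ) * ((i : ℝ) * (-x) ^ (i - 1) * (-1)) /
          (Nat.factorial i : ℝ)) x := by
    intro i _
    have h1 : HasDerivAt (fun y : ℝ => (-y) ^ i) ((i : ℝ) * (-x) ^ (i - 1) * (-1)) x := by
      simpa using ((hasDerivAt_id' x).fun_neg).fun_pow i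
    exact (h1.const_mul _).div_const _
  have := HasDerivAt.fun_sum h
  unfold lagPoly
  simpa [lagPoly] using this

lemma nat_pow_le_choose (m n : ℕ) : (n : ℕ) ^ m ≤ Nat.factorial m * Nat.choose (m + n) m := by
  rw [← Nat.descFactorial_eq_factorial_mul_choose, Nat.descFactorial_eq_prod_range]
  calc n ^ m = ∏ _i ∈ Finset.range m, n := by rw [Finset.prod_const, Finset.card_range]
  _ ≤ ∏ i ∈ Finset.range m, (m + n - i) := by
      apply Finset.prod_le_prod'
      intro i hi
      have := Finset.mem_range.mp hi
      omega

set_option maxHeartbeats 2000000 in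
theorem stmt14 (q : ℕ) (hq : 1 ≤ q) (b : ℝ) (hb : 0 < b)
    (t : ℝ) (ht0 : 0 ≤ t) (ht1 : t < 1)
    (C : ℝ) (hC : 0 < C) (τ : ℕ → ℝ) (hτ : ∀ n : ℕ, |τ n| ≤ C * (1 + (n:ℝ)) ^ t) :
    {n : ℕ | lagPoly q n (b/2) ≠ 0 ∧
      ((n:ℝ) - b/2 - τ n) * lagPoly q n (b/2) + b * deriv (lagPoly q n) (b/2) = 0}.Finite := by
  obtain ⟨m, rfl⟩ : ∃ m, q = m + 1 := ⟨q - 1, (Nat.succ_pred_eq_of_pos hq).symm⟩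
  set x := b / 2 with hxdef
  have hx : 0 < x := by positivity
  -- notation
  obtain ⟨S, hS⟩ : ∃ S : ℝ, S = ∑ i ∈ Finset.range m, x ^ (i + 1) / (Nat.factorial (i + 1) : ℝ) :=
    ⟨_, rfl⟩
  obtain ⟨K, hK⟩ : ∃ K : ℝ, K = ∑ i ∈ Finset.range m, x ^ i / (Nat.factorial i : ℝ) := ⟨_, rfl⟩
  have hS0 : 0 ≤ S := by
    rw [hS]; apply Finset.sum_nonneg; intro i _; positivity
  have hK0 : 0 ≤ K := by
    rw [hK]; apply Finset.sum_nonneg; intro i _; positivity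
  obtain ⟨B, hB⟩ : ∃ B : ℝ, B = ((m : ℝ) + 2) ^ (m - 1) := ⟨_, rfl⟩
  have hB0 : (0:ℝ) < B := by rw [hB]; positivity
  -- upper bound for the binomial coefficients appearing with index i+1
  have hchoose_ub : ∀ n i : ℕ, i < m →
      (Nat.choose (m + n) (m - (i + 1)) : ℝ) ≤ ((m + n + 1 : ℕ) : ℝ) ^ (m - 1) := by
    intro n i hi
    have h1 : Nat.choose (m + n) (m - (i + 1)) ≤ (m + n + 1) ^ (m - 1) := by
      calc Nat.choose (m + n) (m - (i + 1)) ≤ (m + n) ^ (m - (i + 1)) := Nat.choose_le_pow _ _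
      _ ≤ (m + n + 1) ^ (m - (i + 1)) := Nat.pow_le_pow_left (by omega) _
      _ ≤ (m + n + 1) ^ (m - 1) := Nat.pow_le_pow_right (by omega) (by omega)
    exact_mod_cast h1
  -- the value of the derivative
  have hderiv : ∀ n : ℕ, deriv (lagPoly (m + 1) n) x =
      ∑ i ∈ Finset.range (m + 1),
        (Nat.choose (m + n) (m - i) : ℝ) * ((i : ℝ) * (-x) ^ (i - 1) * (-1)) /
          (Nat.factorial i : ℝ) := by
    intro n
    have := (lag_hasDerivAt (m + 1) n x).deriv
    simpa [Nat.add_sub_cancel] using this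
  -- lower bound on lagPoly
  have hLlb : ∀ n : ℕ, (n : ℝ) ^ m / (Nat.factorial m : ℝ) -
      ((m + n + 1 : ℕ) : ℝ) ^ (m - 1) * S ≤ lagPoly (m + 1) n x := by
    intro n
    have hsplit : lagPoly (m + 1) n x = (Nat.choose (m + n) m : ℝ) +
        ∑ i ∈ Finset.range m,
          (Nat.choose (m + n) (m - (i + 1)) : ℝ) * (-x) ^ (i + 1) /
            (Nat.factorial (i + 1) : ℝ) := by
      rw [lagPoly, Finset.sum_range_succ']
      simp [Nat.add_sub_cancel, add_comm]
    rw [hsplit]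
    have h1 : (n : ℝ) ^ m / (Nat.factorial m : ℝ) ≤ (Nat.choose (m + n) m : ℝ) := by
      rw [div_le_iff₀ (by positivity)]
      have h := nat_pow_le_choose m n
      have h' : ((n ^ m : ℕ) : ℝ) ≤ ((Nat.factorial m * Nat.choose (m + n) m : ℕ) : ℝ) := by
        exact_mod_cast h
      push_cast at h'
      linarith
    have h2 : -(((m + n + 1 : ℕ) : ℝ) ^ (m - 1) * S) ≤
        ∑ i ∈ Finset.range m,
          (Nat.choose (m + n) (m - (i + 1)) : ℝ) * (-x) ^ (i + 1) /
            (Nat.factorial (i + 1) : ℝ) := by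
      rw [hS, Finset.mul_sum, ← Finset.sum_neg_distrib]
      apply Finset.sum_le_sum
      intro i hi
      have hi' := Finset.mem_range.mp hi
      have habs : |(Nat.choose (m + n) (m - (i + 1)) : ℝ) * (-x) ^ (i + 1) /
          (Nat.factorial (i + 1) : ℝ)| ≤
          ((m + n + 1 : ℕ) : ℝ) ^ (m - 1) * (x ^ (i + 1) / (Nat.factorial (i + 1) : ℝ)) := by
        rw [abs_div, abs_mul, abs_pow, abs_neg, abs_of_pos hx, Nat.abs_cast, Nat.abs_cast,
          mul_div_assoc]
        exact mul_le_mul_of_nonneg_right (hchoose_ub n i hi') (by positivity)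
      have := (abs_le.mp habs).1
      linarith
    linarith
  -- upper bound on the derivative
  have hDub : ∀ n : ℕ, |deriv (lagPoly (m + 1) n) x| ≤ ((m + n + 1 : ℕ) : ℝ) ^ (m - 1) * K := by
    intro n
    rw [hderiv n, Finset.sum_range_succ']
    simp only [Nat.cast_zero, zero_mul, mul_zero, zero_div, add_zero]
    calc |∑ i ∈ Finset.range m, (Nat.choose (m + n) (m - (i + 1)) : ℝ) *
          (((i + 1 : ℕ) : ℝ) * (-x) ^ (i + 1 - 1) * (-1)) / (Nat.factorial (i + 1) : ℝ)|
        ≤ ∑ i ∈ Finset.range m, |(Nat.choose (m + n) (m - (i + 1)) : ℝ) *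
          (((i + 1 : ℕ) : ℝ) * (-x) ^ (i + 1 - 1) * (-1)) / (Nat.factorial (i + 1) : ℝ)| :=
          Finset.abs_sum_le_sum_abs _ _
      _ ≤ ∑ i ∈ Finset.range m, ((m + n + 1 : ℕ) : ℝ) ^ (m - 1) *
          (x ^ i / (Nat.factorial i : ℝ)) := by
          apply Finset.sum_le_sum
          intro i hi
          have hi' := Finset.mem_range.mp hi
          have e1 : |(Nat.choose (m + n) (m - (i + 1)) : ℝ) *
              (((i + 1 : ℕ) : ℝ) * (-x) ^ (i + 1 - 1) * (-1)) / (Nat.factorial (i + 1) : ℝ)| =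
              (Nat.choose (m + n) (m - (i + 1)) : ℝ) * (((i + 1 : ℕ) : ℝ) * x ^ i) /
                (Nat.factorial (i + 1) : ℝ) := by
            rw [Nat.add_sub_cancel, abs_div, abs_mul, abs_mul, abs_mul, abs_pow, abs_neg,
              abs_neg, abs_one, abs_of_pos hx, Nat.abs_cast, Nat.abs_cast, Nat.abs_cast, mul_one]
          have e2 : (Nat.choose (m + n) (m - (i + 1)) : ℝ) * (((i + 1 : ℕ) : ℝ) * x ^ i) /
              (Nat.factorial (i + 1) : ℝ) =
              (Nat.choose (m + n) (m - (i + 1)) : ℝ) * (x ^ i / (Nat.factorial i : ℝ)) := by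
            have h2 : (Nat.factorial i : ℝ) ≠ 0 := by positivity
            have h1 : ((i : ℝ) + 1) ≠ 0 := by positivity
            rw [Nat.factorial_succ]
            push_cast
            field_simp
          rw [e1, e2]
          exact mul_le_mul_of_nonneg_right (hchoose_ub n i hi') (by positivity)
      _ = ((m + n + 1 : ℕ) : ℝ) ^ (m - 1) * K := by rw [hK, Finset.mul_sum]
  -- eventual bound on τ
  have htau_ev : ∀ᶠ n : ℕ in atTop, τ n ≤ (n : ℝ) / 4 := by
    have h0 : Tendsto (fun y : ℝ => y ^ (t - 1)) atTop (nhds 0) := by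
      have := tendsto_rpow_neg_atTop (y := 1 - t) (by linarith)
      simpa [neg_sub] using this
    have h1 : Tendsto (fun n : ℕ => (1 + (n : ℝ)) ^ (t - 1)) atTop (nhds 0) := by
      apply h0.comp
      exact tendsto_atTop_add_const_left _ 1 tendsto_natCast_atTop_atTop
    have h2 : Tendsto (fun n : ℕ => C * (1 + (n : ℝ)) ^ (t - 1)) atTop (nhds 0) := by
      simpa using h1.const_mul C
    have h3 : ∀ᶠ n : ℕ in atTop, C * (1 + (n : ℝ)) ^ (t - 1) < 1/8 :=
      h2.eventually_lt_const (by norm_num)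
    filter_upwards [h3, eventually_ge_atTop 1] with n hn hn1
    have hn1' : (1:ℝ) ≤ (n : ℝ) := by exact_mod_cast hn1
    have hpos : (0:ℝ) < 1 + (n : ℝ) := by positivity
    have key : C * (1 + (n : ℝ)) ^ t = (C * (1 + (n : ℝ)) ^ (t - 1)) * (1 + (n : ℝ)) := by
      rw [mul_assoc, ← Real.rpow_add_one (ne_of_gt hpos)]
      ring_nf
    have h4 : C * (1 + (n : ℝ)) ^ t ≤ (1/8) * (1 + (n : ℝ)) := by
      rw [key]
      apply mul_le_mul_of_nonneg_right (le_of_lt hn) (le_of_lt hpos)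
    have h5 : (1/8 : ℝ) * (1 + (n : ℝ)) ≤ (n : ℝ) / 4 := by linarith
    have := (abs_le.mp (hτ n)).2
    linarith
  -- the main eventual positivity
  have hev : ∀ᶠ n : ℕ in atTop, 0 < ((n : ℝ) - x - τ n) * lagPoly (m + 1) n x +
      b * deriv (lagPoly (m + 1) n) x := by
    have hc1 : ∀ᶠ n : ℕ in atTop, (4 : ℝ) * x ≤ (n : ℝ) :=
      tendsto_natCast_atTop_atTop.eventually_ge_atTop _
    have hc2 : ∀ᶠ n : ℕ in atTop, 2 * (Nat.factorial m : ℝ) * B * S ≤ (n : ℝ) :=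
      tendsto_natCast_atTop_atTop.eventually_ge_atTop _
    have hc3 : ∀ᶠ n : ℕ in atTop, 4 * (Nat.factorial m : ℝ) * b * B * K + 1 ≤ (n : ℝ) :=
      tendsto_natCast_atTop_atTop.eventually_ge_atTop _
    filter_upwards [htau_ev, hc1, hc2, hc3, eventually_ge_atTop 1] with n htn h1 h2 h3 hn1
    have hn1' : (1:ℝ) ≤ (n : ℝ) := by exact_mod_cast hn1
    have hnpos : (0:ℝ) < (n : ℝ) := by linarith
    have hfm : (0:ℝ) < (Nat.factorial m : ℝ) := by positivity
    -- bound P n ≤ B * n^(m-1)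
    have hP : ((m + n + 1 : ℕ) : ℝ) ^ (m - 1) ≤ B * (n : ℝ) ^ (m - 1) := by
      have hnat : (m + n + 1) ^ (m - 1) ≤ ((m + 2) * n) ^ (m - 1) := by
        apply Nat.pow_le_pow_left
        nlinarith [hn1]
      calc ((m + n + 1 : ℕ) : ℝ) ^ (m - 1) = (((m + n + 1) ^ (m - 1) : ℕ) : ℝ) := by push_cast; ring
      _ ≤ ((((m + 2) * n) ^ (m - 1) : ℕ) : ℝ) := by exact_mod_cast hnat
      _ = B * (n : ℝ) ^ (m - 1) := by rw [hB]; push_cast; rw [mul_pow]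
    have hPpos : (0:ℝ) ≤ ((m + n + 1 : ℕ) : ℝ) ^ (m - 1) := by positivity
    have hpow_pos : (0:ℝ) < (n : ℝ) ^ (m - 1) := by positivity
    -- L lower bound refined
    have hL1 : (n : ℝ) ^ m / (2 * (Nat.factorial m : ℝ)) ≤ lagPoly (m + 1) n x := by
      have := hLlb n
      have hBS : ((m + n + 1 : ℕ) : ℝ) ^ (m - 1) * S ≤ (n : ℝ) ^ m / (2 * (Nat.factorial m : ℝ)) := by
        rcases Nat.eq_zero_or_pos m with hm | hm
        · subst hm
          have hSz : S = 0 := by simp [hS]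
          rw [hSz, mul_zero]
          positivity
        · have hmm : m - 1 + 1 = m := by omega
          have hnm : (n : ℝ) ^ m = (n : ℝ) ^ (m - 1) * (n : ℝ) := by
            rw [← pow_succ, hmm]
          calc ((m + n + 1 : ℕ) : ℝ) ^ (m - 1) * S ≤ B * (n : ℝ) ^ (m - 1) * S := by
                apply mul_le_mul_of_nonneg_right hP hS0
          _ ≤ (n : ℝ) ^ (m - 1) * ((n : ℝ) / (2 * (Nat.factorial m : ℝ))) := by
                rw [mul_comm B _, mul_assoc]
                apply mul_le_mul_of_nonneg_left _ (le_of_lt hpow_pos)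
                rw [le_div_iff₀ (by positivity)]
                nlinarith [hB0, hS0]
          _ = (n : ℝ) ^ m / (2 * (Nat.factorial m : ℝ)) := by
                rw [hnm]; ring
      calc (n : ℝ) ^ m / (2 * (Nat.factorial m : ℝ))
          = (n : ℝ) ^ m / (Nat.factorial m : ℝ) - (n : ℝ) ^ m / (2 * (Nat.factorial m : ℝ)) := by
            field_simp; ring
      _ ≤ (n : ℝ) ^ m / (Nat.factorial m : ℝ) - ((m + n + 1 : ℕ) : ℝ) ^ (m - 1) * S := by
            linarith
      _ ≤ lagPoly (m + 1) n x := this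
    have hLpos : 0 ≤ lagPoly (m + 1) n x := le_trans (by positivity) hL1
    -- assemble
    have hfac : (n : ℝ) / 2 ≤ (n : ℝ) - x - τ n := by linarith
    have step1 : ((n : ℝ) / 2) * ((n : ℝ) ^ m / (2 * (Nat.factorial m : ℝ))) ≤
        ((n : ℝ) - x - τ n) * lagPoly (m + 1) n x := by
      apply mul_le_mul hfac hL1 (by positivity) (by linarith)
    have step2 : b * deriv (lagPoly (m + 1) n) x ≥ -(b * (B * (n : ℝ) ^ (m - 1) * K)) := by
      have habs := hDub n
      have h1' : |b * deriv (lagPoly (m + 1) n) x| ≤ b * (B * (n : ℝ) ^ (m - 1) * K) := by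
        rw [abs_mul, abs_of_pos hb]
        apply mul_le_mul_of_nonneg_left _ hb.le
        calc |deriv (lagPoly (m + 1) n) x| ≤ ((m + n + 1 : ℕ) : ℝ) ^ (m - 1) * K := habs
        _ ≤ B * (n : ℝ) ^ (m - 1) * K := mul_le_mul_of_nonneg_right hP hK0
      linarith [(abs_le.mp h1').1]
    have main : b * (B * (n : ℝ) ^ (m - 1) * K) <
        ((n : ℝ) / 2) * ((n : ℝ) ^ m / (2 * (Nat.factorial m : ℝ))) := by
      rcases Nat.eq_zero_or_pos m with hm | hm
      · subst hm
        have hKz : K = 0 := by simp [hK]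
        rw [hKz, mul_zero, mul_zero]
        have : (0:ℝ) < (n : ℝ) ^ 0 / (2 * (Nat.factorial 0 : ℝ)) := by positivity
        positivity
      · have h' : m - 1 + 1 = m := by omega
        have hnm : (n : ℝ) ^ m = (n : ℝ) ^ (m - 1) * (n : ℝ) := by rw [← pow_succ, h']
        have hnn : (n : ℝ) ≤ (n : ℝ) * (n : ℝ) := by nlinarith
        have key : 4 * (Nat.factorial m : ℝ) * (b * (B * K)) < (n : ℝ) * (n : ℝ) := by
          nlinarith [h3, hnn]
        have e : ((n : ℝ) / 2) * ((n : ℝ) ^ m / (2 * (Nat.factorial m : ℝ))) =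
            (n : ℝ) ^ (m - 1) * ((n : ℝ) * (n : ℝ) / (4 * (Nat.factorial m : ℝ))) := by
          rw [hnm]; field_simp; ring
        have e2 : b * (B * (n : ℝ) ^ (m - 1) * K) = (n : ℝ) ^ (m - 1) * (b * (B * K)) := by ring
        rw [e, e2]
        apply mul_lt_mul_of_pos_left _ hpow_pos
        rw [lt_div_iff₀ (by positivity)]
        linarith [key]
    linarith [step1, step2, main]
  -- conclude finiteness
  obtain ⟨N, hN⟩ := eventually_atTop.mp hev
  apply Set.Finite.subset (Set.finite_Iio N)
  intro n hn
  simp only [Set.mem_setOf_eq] at hn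
  by_contra h'
  simp only [Set.mem_Iio, not_lt] at h'
  exact (hN n h').ne' hn.2
end

section
/- Let q ≥ 1 be an integer and b > 0. Then there exist constants d₀ > 0 and N₀ ∈ ℕ such that for every integer n ≥ N₀ one has L^n_{q−1}(b/2) ≠ 0 and |b·(L^n_{q−1})'(b/2)/L^n_{q−1}(b/2)| ≤ d₀/n; consequently, every real number τ with (n − b/2 − τ)·L^n_{q−1}(b/2) + b·(L^n_{q−1})'(b/2) = 0 and n ≥ N₀ satisfies n − b/2 − d₀/n ≤ τ ≤ n − b/2 + d₀/n. -/
lemma lagPoly_one (n : ℕ) : lagPoly 1 n = fun _ => 1 := by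
  funext x; simp [lagPoly]


lemma lagPoly_hasDerivAt (q n : ℕ) (x : ℝ) :
    HasDerivAt (lagPoly q n)
      (∑ i ∈ Finset.range q,
        (Nat.choose (q - 1 + n) (q - 1 - i) : ℝ) * ((i:ℝ) * (-x)^(i-1) * (-1)) / (Nat.factorial i : ℝ)) x := by
  have h : ∀ i ∈ Finset.range q, HasDerivAt
      (fun y : ℝ => (Nat.choose (q - 1 + n) (q - 1 - i) : ℝ) * (-y)^i / (Nat.factorial i : ℝ))
      ((Nat.choose (q - 1 + n) (q - 1 - i) : ℝ) * ((i:ℝ) * (-x)^(i-1) * (-1)) / (Nat.factorial i : ℝ)) x := by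
    intro i _
    exact (((hasDerivAt_neg x).pow i).const_mul _).div_const _
  show HasDerivAt (fun y => lagPoly q n y) _ x
  simpa [lagPoly] using HasDerivAt.fun_sum h

lemma lagPoly_deriv (q n : ℕ) (x : ℝ) :
    deriv (lagPoly q n) x = ∑ i ∈ Finset.range q,
      (Nat.choose (q - 1 + n) (q - 1 - i) : ℝ) * ((i:ℝ) * (-x)^(i-1) * (-1)) / (Nat.factorial i : ℝ) :=
  (lagPoly_hasDerivAt q n x).deriv

lemma stmt_aux (k : ℕ) (b : ℝ) (hb : 0 < b) :
    ∃ d₀ : ℝ, 0 < d₀ ∧ ∃ N₀ : ℕ, ∀ n : ℕ, N₀ ≤ n →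
      lagPoly (k+2) n (b/2) ≠ 0 ∧
      |b * deriv (lagPoly (k+2) n) (b/2) / lagPoly (k+2) n (b/2)| ≤ d₀ / (n : ℝ) ∧
      ∀ τ : ℝ,
        ((n:ℝ) - b/2 - τ) * lagPoly (k+2) n (b/2) + b * deriv (lagPoly (k+2) n) (b/2) = 0 →
        (n:ℝ) - b/2 - d₀/(n:ℝ) ≤ τ ∧ τ ≤ (n:ℝ) - b/2 + d₀/(n:ℝ) := by
  have hb2 : (0:ℝ) < b/2 := by linarith
  set F : ℝ := (Nat.factorial (k+1) : ℝ) with hF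
  have hFpos : (0:ℝ) < F := by rw [hF]; exact_mod_cast Nat.factorial_pos _
  set A : ℝ := ∑ j ∈ Finset.range (k+1), 2^(k+1) * (b/2)^(j+1) / (Nat.factorial (j+1) : ℝ) with hA
  set B : ℝ := ∑ j ∈ Finset.range (k+1), 2^(k+1) * (b/2)^j / (Nat.factorial j : ℝ) with hB
  have hA0 : 0 ≤ A := Finset.sum_nonneg fun j _ => by positivity
  have hB0 : 0 ≤ B := Finset.sum_nonneg fun j _ => by positivity
  have hbBF : (0:ℝ) ≤ 2*b*B*F :=
    mul_nonneg (mul_nonneg (mul_nonneg (by norm_num) hb.le) hB0) hFpos.le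
  refine ⟨2*b*B*F + 1, by linarith, max (k+2) (⌈2*F*A⌉₊ + 1), fun n hn => ?_⟩
  have hnk : k + 1 + n ≤ 2 * n := by have := le_trans (le_max_left _ _) hn; omega
  have hn1 : 1 ≤ n := by have := le_trans (le_max_left _ _) hn; omega
  have hnR : (1:ℝ) ≤ (n:ℝ) := by exact_mod_cast hn1
  have hn0 : (0:ℝ) < (n:ℝ) := by linarith
  have hnA : 2*F*A ≤ (n:ℝ) := by
    have h1 : ⌈2*F*A⌉₊ ≤ n := by have := le_trans (le_max_right _ _) hn; omega
    calc 2*F*A ≤ (⌈2*F*A⌉₊:ℝ) := Nat.le_ceil _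
      _ ≤ (n:ℝ) := by exact_mod_cast h1
  have hcub' : ∀ m : ℕ, m ≤ k → ((k+1+n).choose m : ℝ) ≤ 2^(k+1) * (n:ℝ)^k := by
    intro m hm
    calc ((k+1+n).choose m : ℝ) ≤ ((k+1+n : ℕ):ℝ)^m := by
          exact_mod_cast Nat.choose_le_pow (k+1+n) m
      _ ≤ (2*(n:ℝ))^m := by
          have : ((k+1+n : ℕ):ℝ) ≤ 2*(n:ℝ) := by exact_mod_cast hnk
          exact pow_le_pow_left₀ (by positivity) this m
      _ ≤ (2*(n:ℝ))^k := pow_le_pow_right₀ (by linarith) hm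
      _ = 2^k * (n:ℝ)^k := mul_pow 2 (n:ℝ) k
      _ ≤ 2^(k+1) * (n:ℝ)^k := by
          have h1 : (0:ℝ) ≤ (n:ℝ)^k := by positivity
          have h2 : (2:ℝ)^k ≤ 2^(k+1) := by
            rw [pow_succ]; nlinarith [pow_pos (by norm_num : (0:ℝ) < 2) k]
          nlinarith
  have hclow : (n:ℝ)^(k+1) / F ≤ ((k+1+n).choose (k+1) : ℝ) := by
    have h := Nat.pow_le_choose (α := ℝ) (k+1) (k+1+n)
    have he : k+1+n+1 - (k+1) = n+1 := by omega
    rw [he] at h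
    refine le_trans ?_ h
    rw [hF]
    gcongr
    omega
  -- structure of P
  have hP : lagPoly (k+2) n (b/2) =
      (∑ j ∈ Finset.range (k+1), ((k+1+n).choose (k-j) : ℝ) * (-(b/2))^(j+1) / (Nat.factorial (j+1) : ℝ))
      + ((k+1+n).choose (k+1) : ℝ) := by
    show (∑ i ∈ Finset.range (k+1+1), ((k+1+n).choose (k+1-i) : ℝ) * (-(b/2))^i / (Nat.factorial i : ℝ)) = _
    rw [Finset.sum_range_succ']
    simp [Nat.succ_sub_succ]
  set S : ℝ := ∑ j ∈ Finset.range (k+1), ((k+1+n).choose (k-j) : ℝ) * (-(b/2))^(j+1) / (Nat.factorial (j+1) : ℝ) with hSdef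
  have hS : |S| ≤ A * (n:ℝ)^k := by
    calc |S| ≤ ∑ j ∈ Finset.range (k+1),
        |((k+1+n).choose (k-j) : ℝ) * (-(b/2))^(j+1) / (Nat.factorial (j+1) : ℝ)| :=
          Finset.abs_sum_le_sum_abs _ _
      _ ≤ ∑ j ∈ Finset.range (k+1), (2^(k+1) * (b/2)^(j+1) / (Nat.factorial (j+1) : ℝ)) * (n:ℝ)^k := by
          refine Finset.sum_le_sum fun j _ => ?_
          rw [abs_div, abs_mul, abs_pow, abs_neg, abs_of_pos hb2, Nat.abs_cast, Nat.abs_cast]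
          calc ((k+1+n).choose (k-j) : ℝ) * (b/2)^(j+1) / (Nat.factorial (j+1) : ℝ)
              ≤ (2^(k+1) * (n:ℝ)^k) * (b/2)^(j+1) / (Nat.factorial (j+1) : ℝ) := by
                gcongr
                exact hcub' (k-j) (Nat.sub_le k j)
            _ = (2^(k+1) * (b/2)^(j+1) / (Nat.factorial (j+1) : ℝ)) * (n:ℝ)^k := by ring
      _ = A * (n:ℝ)^k := by rw [hA, Finset.sum_mul]
  have hAn : A * (n:ℝ)^k ≤ (n:ℝ)^(k+1)/(2*F) := by
    have h1 : A ≤ (n:ℝ)/(2*F) := by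
      rw [le_div_iff₀ (by positivity)]
      calc A*(2*F) = 2*F*A := by ring
        _ ≤ (n:ℝ) := hnA
    calc A * (n:ℝ)^k ≤ ((n:ℝ)/(2*F)) * (n:ℝ)^k := by
          exact mul_le_mul_of_nonneg_right h1 (by positivity)
      _ = (n:ℝ)^(k+1)/(2*F) := by rw [pow_succ]; ring
  have hhalf : (n:ℝ)^(k+1)/F - (n:ℝ)^(k+1)/(2*F) = (n:ℝ)^(k+1)/(2*F) := by
    field_simp; ring
  have hPlow : (n:ℝ)^(k+1)/(2*F) ≤ lagPoly (k+2) n (b/2) := by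
    rw [hP]
    have h1 : -(A * (n:ℝ)^k) ≤ S := by
      have := neg_abs_le S; linarith
    linarith
  have hPpos : 0 < lagPoly (k+2) n (b/2) := lt_of_lt_of_le (by positivity) hPlow
  -- derivative bound
  have hDb : |deriv (lagPoly (k+2) n) (b/2)| ≤ B * (n:ℝ)^k := by
    rw [lagPoly_deriv]
    show |∑ i ∈ Finset.range (k+1+1),
        ((k+1+n).choose (k+1-i) : ℝ) * ((i:ℝ) * (-(b/2))^(i-1) * (-1)) / (Nat.factorial i : ℝ)| ≤ _
    rw [Finset.sum_range_succ']
    simp only [Nat.cast_zero, zero_mul, mul_zero, zero_div, add_zero, Nat.succ_sub_succ,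
      Nat.add_sub_cancel]
    calc |∑ j ∈ Finset.range (k+1),
          ((k+1+n).choose (k-j) : ℝ) * (((j+1:ℕ):ℝ) * (-(b/2))^j * (-1)) / (Nat.factorial (j+1) : ℝ)|
        ≤ ∑ j ∈ Finset.range (k+1),
          |((k+1+n).choose (k-j) : ℝ) * (((j+1:ℕ):ℝ) * (-(b/2))^j * (-1)) / (Nat.factorial (j+1) : ℝ)| :=
          Finset.abs_sum_le_sum_abs _ _
      _ ≤ ∑ j ∈ Finset.range (k+1), (2^(k+1) * (b/2)^j / (Nat.factorial j : ℝ)) * (n:ℝ)^k := by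
          refine Finset.sum_le_sum fun j _ => ?_
          rw [abs_div, abs_mul, abs_mul, abs_mul, abs_neg, abs_one, mul_one, abs_pow, abs_neg,
            abs_of_pos hb2, Nat.abs_cast, Nat.abs_cast, Nat.abs_cast]
          have hfe : (Nat.factorial (j+1) : ℝ) = ((j+1:ℕ):ℝ) * (Nat.factorial j : ℝ) := by
            rw [Nat.factorial_succ]; push_cast; ring
          have hj1 : (0:ℝ) < ((j+1:ℕ):ℝ) := by positivity
          have hjf : (0:ℝ) < (Nat.factorial j : ℝ) := by exact_mod_cast Nat.factorial_pos j
          calc ((k+1+n).choose (k-j) : ℝ) * (((j+1:ℕ):ℝ) * (b/2)^j) / (Nat.factorial (j+1) : ℝ)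
              ≤ (2^(k+1) * (n:ℝ)^k) * (((j+1:ℕ):ℝ) * (b/2)^j) / (Nat.factorial (j+1) : ℝ) := by
                gcongr
                exact hcub' (k-j) (Nat.sub_le k j)
            _ = (2^(k+1) * (b/2)^j / (Nat.factorial j : ℝ)) * (n:ℝ)^k := by
                rw [hfe]; field_simp
      _ = B * (n:ℝ)^k := by rw [hB, Finset.sum_mul]
  -- final ratio bound
  have hratio : |b * deriv (lagPoly (k+2) n) (b/2) / lagPoly (k+2) n (b/2)| ≤ (2*b*B*F + 1) / (n:ℝ) := by
    rw [abs_div, abs_mul, abs_of_pos hb, abs_of_pos hPpos]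
    rw [div_le_div_iff₀ hPpos hn0]
    have h1 : b * |deriv (lagPoly (k+2) n) (b/2)| * (n:ℝ) ≤ b * (B * (n:ℝ)^k) * (n:ℝ) := by
      gcongr
    have h2 : b * (B * (n:ℝ)^k) * (n:ℝ) = b*B*(n:ℝ)^(k+1) := by rw [pow_succ]; ring
    have h3 : (2*b*B*F+1) * ((n:ℝ)^(k+1)/(2*F)) = b*B*(n:ℝ)^(k+1) + (n:ℝ)^(k+1)/(2*F) := by
      field_simp
    have h4 : (2*b*B*F+1) * ((n:ℝ)^(k+1)/(2*F)) ≤ (2*b*B*F+1) * lagPoly (k+2) n (b/2) := by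
      exact mul_le_mul_of_nonneg_left hPlow (by linarith)
    have h5 : (0:ℝ) ≤ (n:ℝ)^(k+1)/(2*F) := by positivity
    linarith
  refine ⟨ne_of_gt hPpos, hratio, fun τ hτ => ?_⟩
  have hτ' : τ - ((n:ℝ) - b/2) = b * deriv (lagPoly (k+2) n) (b/2) / lagPoly (k+2) n (b/2) := by
    rw [eq_div_iff (ne_of_gt hPpos)]
    linear_combination -hτ
  have habs := abs_le.mp (hτ' ▸ hratio)
  constructor <;> linarith [habs.1, habs.2]

theorem stmt15 (q : ℕ) (hq : 1 ≤ q) (b : ℝ) (hb : 0 < b) :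
    ∃ d₀ : ℝ, 0 < d₀ ∧ ∃ N₀ : ℕ, ∀ n : ℕ, N₀ ≤ n →
      lagPoly q n (b/2) ≠ 0 ∧
      |b * deriv (lagPoly q n) (b/2) / lagPoly q n (b/2)| ≤ d₀ / (n : ℝ) ∧
      ∀ τ : ℝ,
        ((n:ℝ) - b/2 - τ) * lagPoly q n (b/2) + b * deriv (lagPoly q n) (b/2) = 0 →
        (n:ℝ) - b/2 - d₀/(n:ℝ) ≤ τ ∧ τ ≤ (n:ℝ) - b/2 + d₀/(n:ℝ) := by
  match q, hq with
  | 1, _ =>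
    refine ⟨1, one_pos, 1, fun n hn => ?_⟩
    have hn0 : (0:ℝ) < n := by exact_mod_cast hn
    simp only [lagPoly_one, deriv_const', mul_zero, add_zero, mul_one, div_one]
    refine ⟨one_ne_zero, by simp only [zero_div, abs_zero]; positivity, fun τ hτ => ?_⟩
    have hτ' : τ = (n:ℝ) - b/2 := by linarith
    have h1 : 0 ≤ 1/(n:ℝ) := by positivity
    constructor <;> simp only [hτ'] <;> linarith
  | (k+2), _ => exact stmt_aux k b hb
end

section
/- Let p ≥ 1 be an integer, r > 0, and let f be holomorphic on the open disc {z ∈ ℂ : |z| < r}, with Taylor expansion f(z) = Σ_{j≥0} β_j·z^j. Suppose that f(x) ∈ ℝ and f(x·e^{iπ/p}) ∈ ℝ for every real x ∈ (0, r). Then β_j = 0 for every j ∈ ℕ that is not divisible by p. -/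
open Complex Filter

lemma key16 (r : ℝ) (hr : 0 < r) (f : ℂ → ℂ) (β : ℕ → ℂ)
    (hsum : ∀ z ∈ Metric.ball (0:ℂ) r, HasSum (fun j : ℕ => β j * z^j) (f z))
    (c : ℂ) (hc : ‖c‖ = 1)
    (hreal : ∀ x : ℝ, 0 < x → x < r → (f ((x:ℂ) * c)).im = 0) :
    ∀ j : ℕ, (starRingEnd ℂ) (β j * c^j) = β j * c^j := by
  set γ : ℕ → ℂ := fun j => β j * c^j - (starRingEnd ℂ) (β j * c^j) with hγ
  set g : ℂ → ℂ := fun z => f (c * z) - (starRingEnd ℂ) (f (c * (starRingEnd ℂ) z)) with hg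
  -- Step 1 : power series for g
  have hgs : ∀ z ∈ Metric.ball (0:ℂ) r, HasSum (fun j : ℕ => γ j * z^j) (g z) := by
    intro z hz
    have hz' : ‖z‖ < r := by simpa [Metric.mem_ball, Complex.dist_eq] using hz
    have h1 : c * z ∈ Metric.ball (0:ℂ) r := by
      simp [Metric.mem_ball, Complex.dist_eq, map_mul, hc, hz']
    have h2 : c * (starRingEnd ℂ) z ∈ Metric.ball (0:ℂ) r := by
      simp [Metric.mem_ball, Complex.dist_eq, map_mul, hc, hz']
    have s1 := hsum _ h1
    have s2 := (hsum _ h2).mapL (Complex.conjCLE.toContinuousLinearMap)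
    have s1' : HasSum (fun j : ℕ => (β j * c^j) * z^j) (f (c*z)) := by
      convert s1 using 2 with j; ring
    have s2' : HasSum (fun j : ℕ => (starRingEnd ℂ) (β j * c^j) * z^j)
        ((starRingEnd ℂ) (f (c * (starRingEnd ℂ) z))) := by
      convert s2 using 2 with j
      simp [mul_pow, map_mul, map_pow, mul_assoc]
      rfl
    simpa [hγ, sub_mul] using s1'.sub s2'
  -- Step 2 : radius bound
  set q : FormalMultilinearSeries ℂ ℂ ℂ := FormalMultilinearSeries.ofScalars ℂ γ with hq
  have hrad : ENNReal.ofReal r ≤ q.radius := by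
    apply ENNReal.le_of_forall_nnreal_lt
    intro s hs
    have hs' : (s : ℝ) < r := by
      rw [← ENNReal.ofReal_coe_nnreal, ENNReal.ofReal_lt_ofReal_iff hr] at hs
      exact hs
    have hmem : ((s : ℝ) : ℂ) ∈ Metric.ball (0:ℂ) r := by
      simp [Metric.mem_ball, Complex.dist_eq, Complex.norm_real,
        _root_.abs_of_nonneg s.coe_nonneg, hs']
    have hsum' : Summable (fun j : ℕ => γ j * ((s:ℝ):ℂ)^j) := (hgs _ hmem).summable
    have htend : Tendsto (fun j : ℕ => ‖γ j * ((s:ℝ):ℂ)^j‖) atTop (nhds 0) := by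
      simpa using (hsum'.tendsto_atTop_zero.norm)
    obtain ⟨C, hC⟩ := htend.bddAbove_range
    apply q.le_radius_of_bound C
    intro n
    have h1 : ‖q n‖ = ‖γ n‖ := FormalMultilinearSeries.ofScalars_norm ℂ γ n
    have h2 : ‖γ n * ((s:ℝ):ℂ)^n‖ = ‖γ n‖ * (s:ℝ)^n := by
      simp [norm_mul, norm_pow, Complex.norm_real, _root_.abs_of_nonneg s.coe_nonneg]
    rw [h1, ← h2]
    exact hC ⟨n, rfl⟩
  -- Step 3 : HasFPowerSeriesOnBall
  have hfps : HasFPowerSeriesOnBall g q 0 (ENNReal.ofReal r) := by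
    refine ⟨hrad, by simpa using hr, ?_⟩
    intro y hy
    have hy' : y ∈ Metric.ball (0:ℂ) r := by
      rw [← Metric.emetric_ball]; simpa using hy
    have := hgs y hy'
    rw [zero_add]
    convert this using 2 with n
    · rfl
    rw [hq, FormalMultilinearSeries.ofScalars_apply_eq, smul_eq_mul]
  -- Step 4 : g vanishes frequently near r/2
  have hball : ((r/2 : ℝ) : ℂ) ∈ Metric.ball (0:ℂ) r := by
    simp only [Metric.mem_ball, Complex.dist_eq, sub_zero, Complex.norm_real, Real.norm_eq_abs]
    rw [_root_.abs_of_nonneg (by linarith)]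
    linarith
  have hgz : ∀ x : ℝ, 0 < x → x < r → g x = 0 := by
    intro x hx hxr
    have h := hreal x hx hxr
    have hcx : (starRingEnd ℂ) ((x:ℂ)) = (x:ℂ) := Complex.conj_ofReal x
    have : (starRingEnd ℂ) (f ((x:ℂ) * c)) = f ((x:ℂ) * c) :=
      Complex.conj_eq_iff_im.mpr h
    simp only [hg]
    rw [hcx, mul_comm c (x:ℂ), this, sub_self]
  have hfreq : ∃ᶠ z in nhdsWithin ((r/2 : ℝ) : ℂ) {((r/2 : ℝ) : ℂ)}ᶜ, g z = 0 := by
    have ht : Tendsto (fun x : ℝ => (x : ℂ)) (nhdsWithin (r/2) {(r/2 : ℝ)}ᶜ)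
        (nhdsWithin ((r/2 : ℝ) : ℂ) {((r/2 : ℝ) : ℂ)}ᶜ) := by
      apply ContinuousWithinAt.tendsto_nhdsWithin
        (Complex.continuous_ofReal.continuousWithinAt)
      intro x hx hx2
      apply hx
      simp only [Set.mem_singleton_iff] at hx2 ⊢
      exact_mod_cast hx2
    apply ht.frequently
    apply Filter.Eventually.frequently
    have hmem : Set.Ioo (0:ℝ) r ∈ nhdsWithin (r/2) {(r/2:ℝ)}ᶜ :=
      nhdsWithin_le_nhds (Ioo_mem_nhds (by linarith) (by linarith))
    filter_upwards [hmem] with x hx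
    exact hgz x hx.1 hx.2
  -- Step 5 : identity theorem
  have han : AnalyticOnNhd ℂ g (Metric.ball (0:ℂ) r) := by
    intro z hz
    apply hfps.analyticAt_of_mem
    rw [Metric.emetric_ball]
    simpa using hz
  have hzero : Set.EqOn g 0 (Metric.ball (0:ℂ) r) :=
    han.eqOn_zero_of_preconnected_of_frequently_eq_zero
      ((convex_ball _ _).isPreconnected) hball hfreq
  -- Step 6 : coefficients vanish
  have hq0 : q = 0 := by
    have h0 : (0:ℂ) ∈ Metric.ball (0:ℂ) r := by simp [Metric.mem_ball, hr]
    have : HasFPowerSeriesAt (0 : ℂ → ℂ) q 0 := by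
      apply (hfps.hasFPowerSeriesAt).congr
      have : Metric.ball (0:ℂ) r ∈ nhds (0:ℂ) := Metric.ball_mem_nhds _ hr
      filter_upwards [this] with z hz
      exact hzero hz
    exact this.eq_zero
  intro j
  have hγ0 : γ = 0 := by
    rw [hq] at hq0
    exact (FormalMultilinearSeries.ofScalars_series_eq_zero ℂ).mp hq0
  have : γ j = 0 := congrFun hγ0 j
  have hγj : β j * c^j - (starRingEnd ℂ) (β j * c^j) = 0 := this
  linear_combination -hγj

theorem stmt16 (p : ℕ) (hp : 1 ≤ p) (r : ℝ) (hr : 0 < r) (f : ℂ → ℂ) (β : ℕ → ℂ)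
    (hf : DifferentiableOn ℂ f (Metric.ball (0:ℂ) r))
    (hsum : ∀ z ∈ Metric.ball (0:ℂ) r, HasSum (fun j : ℕ => β j * z^j) (f z))
    (hreal₁ : ∀ x : ℝ, 0 < x → x < r → (f (x : ℂ)).im = 0)
    (hreal₂ : ∀ x : ℝ, 0 < x → x < r →
      (f ((x : ℂ) * Complex.exp (Real.pi * Complex.I / (p : ℂ)))).im = 0) :
    ∀ j : ℕ, ¬ (p ∣ j) → β j = 0 := by
  set w : ℂ := (Real.pi : ℂ) * Complex.I / (p : ℂ) with hw
  set ω : ℂ := Complex.exp w with hωdef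
  have hp0 : (p:ℂ) ≠ 0 := Nat.cast_ne_zero.mpr (by omega)
  have hω : ‖ω‖ = 1 := by
    rw [hωdef, Complex.norm_exp, hw,
      show (Real.pi : ℂ) * Complex.I / (p:ℂ) = ((Real.pi / p : ℝ) : ℂ) * Complex.I by
        push_cast; ring]
    simp [Complex.mul_I_re]
  have k1 := key16 r hr f β hsum 1 (by simp) (fun x hx hxr => by simpa using hreal₁ x hx hxr)
  have k2 := key16 r hr f β hsum ω hω (fun x hx hxr => hreal₂ x hx hxr)
  intro j hj
  by_contra hβ
  have h1 : (starRingEnd ℂ) (β j) = β j := by simpa using k1 j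
  have h2 := k2 j
  rw [map_mul, h1, map_pow] at h2
  have hcω : (starRingEnd ℂ) ω = Complex.exp (-w) := by
    rw [hωdef, ← Complex.exp_conj]
    congr 1
    rw [hw]
    simp [map_div₀, map_mul, Complex.conj_I, Complex.conj_ofReal]
    ring
  rw [hcω] at h2
  have hexp : Complex.exp ((j:ℂ) * (-w)) = Complex.exp ((j:ℂ) * w) := by
    rw [Complex.exp_nat_mul, Complex.exp_nat_mul]
    exact mul_left_cancel₀ hβ h2
  rw [Complex.exp_eq_exp_iff_exists_int] at hexp
  obtain ⟨n, hn⟩ := hexp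
  have hπI : (Real.pi : ℂ) * Complex.I ≠ 0 :=
    mul_ne_zero (Complex.ofReal_ne_zero.mpr Real.pi_ne_zero) Complex.I_ne_zero
  have h3 : (j:ℂ) + n * p = 0 := by
    rw [hw] at hn
    field_simp at hn
    have h4 : ((j:ℂ) + n * p) * (2 * ((Real.pi:ℂ) * Complex.I) * p) = 0 := by
      linear_combination -((Real.pi:ℂ) * Complex.I * p) * hn
    rcases mul_eq_zero.mp h4 with h | h
    · exact h
    · exact absurd h (mul_ne_zero (mul_ne_zero two_ne_zero hπI) hp0)
  have h5 : (j:ℤ) + n * p = 0 := by exact_mod_cast h3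
  exact hj (Int.natCast_dvd_natCast.mp ⟨-n, by linear_combination h5⟩)
end
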